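/- Suppose the digraph of W is quasi-strongly connected and the leader set 𝓛 admits no gauge (the subgraph among leaders is structurally unbalanced). Then for every nominal prescribed-time trajectory X with parameters ρ1, ρ2 > 0 and prescribed time T1 > 0, X t k = 0 for all nodes k and all t ≥ T1 (prescribed-time stability within the preassigned time T1). -/

import Mathlib

open Matrix

/-- Time-varying gain: `μ_T(t) = κ/(T − t)` for `0 ≤ t < T`, `0` otherwise. -/
noncomputable def gain (κ T t : ℝ) : ℝ := if 0 ≤ t ∧ t < T then κ / (T - t) else 0

/-- Signed Laplacian `L = D − W` with `D k k = ∑_l |W k l|`. -/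
noncomputable def sLap {N : ℕ} (W : Matrix (Fin N) (Fin N) ℝ) : Matrix (Fin N) (Fin N) ℝ :=
  Matrix.diagonal (fun k => ∑ l, |W k l|) - W

/-- Node `i` reaches node `j`: reflexive–transitive closure of the edge relation
`E i j ↔ W j i ≠ 0`. -/
def Reaches {N : ℕ} (W : Matrix (Fin N) (Fin N) ℝ) : Fin N → Fin N → Prop :=
  Relation.ReflTransGen (fun i j => W j i ≠ 0)

def StronglyConnected {N : ℕ} (W : Matrix (Fin N) (Fin N) ℝ) : Prop :=
  ∀ i j, Reaches W i j

def QuasiStronglyConnected {N : ℕ} (W : Matrix (Fin N) (Fin N) ℝ) : Prop :=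
  ∃ r, ∀ j, Reaches W r j

def WeaklyConnected {N : ℕ} (W : Matrix (Fin N) (Fin N) ℝ) : Prop :=
  ∀ i j, Relation.ReflTransGen (fun a b => W b a ≠ 0 ∨ W a b ≠ 0) i j

/-- `k` is a leader: every node reaching `k` is reached back by `k`. -/
def IsLeader {N : ℕ} (W : Matrix (Fin N) (Fin N) ℝ) (k : Fin N) : Prop :=
  ∀ j, Reaches W j k → Reaches W k j

/-- Closed strong component of a leader `k`. -/
def CSC {N : ℕ} (W : Matrix (Fin N) (Fin N) ℝ) (k : Fin N) : Set (Fin N) :=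
  {j | Reaches W j k ∧ Reaches W k j}

/-- A gauge for a node set `S`. -/
def IsGauge {N : ℕ} (W : Matrix (Fin N) (Fin N) ℝ) (S : Set (Fin N)) (g : Fin N → ℝ) : Prop :=
  (∀ k ∈ S, g k = 1 ∨ g k = -1) ∧ ∀ k ∈ S, ∀ l ∈ S, g k * W k l * g l = |W k l|

/-- Nominal prescribed-time trajectory of the protocol (4). -/
def NominalTraj {N : ℕ} (W : Matrix (Fin N) (Fin N) ℝ) (κ ρ1 ρ2 T1 : ℝ)
    (X : ℝ → Fin N → ℝ) : Prop :=
  Continuous X ∧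
  ∀ t : ℝ, 0 ≤ t → t ≠ T1 →
    HasDerivAt X ((-(ρ1 + ρ2 * gain κ T1 t)) • (sLap W).mulVec (X t)) t

section Helpers

open Matrix Filter NormedSpace

attribute [local instance] Matrix.linftyOpNormedAddCommGroup Matrix.linftyOpNormedRing
  Matrix.linftyOpNormedAlgebra

variable {N : ℕ}

/-- Kernel triviality of the signed Laplacian under QSC + unbalanced leaders. -/
lemma sLap_mulVec_eq_zero (W : Matrix (Fin N) (Fin N) ℝ)
    (hQS : QuasiStronglyConnected W)
    (hunb : ¬ ∃ g : Fin N → ℝ, IsGauge W {k | IsLeader W k} g)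
    (x : Fin N → ℝ) (hx : (sLap W).mulVec x = 0) : x = 0 := by
  obtain ⟨r, hr⟩ := hQS
  have heq : ∀ k, (∑ l, |W k l|) * x k = ∑ l, W k l * x l := by
    intro k
    have h0 := congrFun hx k
    simp only [sLap, Matrix.sub_mulVec, Pi.sub_apply, Pi.zero_apply, sub_eq_zero,
      Matrix.mulVec_diagonal] at h0
    simpa [Matrix.mulVec, dotProduct] using h0
  obtain ⟨k0, -, hk0⟩ := Finset.exists_max_image (Finset.univ : Finset (Fin N))
    (fun k => |x k|) ⟨r, Finset.mem_univ r⟩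
  set m := |x k0| with hm
  have hle : ∀ k, |x k| ≤ m := fun k => hk0 k (Finset.mem_univ k)
  rcases le_or_gt m 0 with hm0 | hm0
  · funext k
    have := (hle k).trans hm0
    have := abs_nonneg (x k)
    simpa using le_antisymm ‹|x k| ≤ 0› ‹0 ≤ |x k|› ▸ (abs_eq_zero.mp (le_antisymm ‹|x k| ≤ 0› ‹0 ≤ |x k|›))
  · have key : ∀ k, |x k| = m → ∀ l,
        x k * (W k l * x l) = |W k l| * (m * m) ∧ (W k l ≠ 0 → |x l| = m) := by
      intro k hk
      have hterm : ∀ l ∈ Finset.univ, (0:ℝ) ≤ |W k l| * (m * m) - x k * (W k l * x l) := by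
        intro l _
        have h1 : x k * (W k l * x l) ≤ |x k * (W k l * x l)| := le_abs_self _
        have h2 : |x k * (W k l * x l)| = |x k| * (|W k l| * |x l|) := by
          rw [abs_mul, abs_mul]
        have h3 : |x k| * (|W k l| * |x l|) ≤ m * (|W k l| * m) := by
          apply mul_le_mul (le_of_eq hk) _ (by positivity) (le_of_lt hm0)
          exact mul_le_mul_of_nonneg_left (hle l) (abs_nonneg _)
        nlinarith [h1, h2.le, h2.ge, h3]
      have hsum : ∑ l, (|W k l| * (m * m) - x k * (W k l * x l)) = 0 := by
        have hxk2 : x k * x k = m * m := by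
          have := sq_abs (x k); rw [hk] at this; nlinarith [this]
        rw [Finset.sum_sub_distrib, ← Finset.sum_mul, ← Finset.mul_sum, ← heq k,
          show x k * ((∑ l, |W k l|) * x k) = (∑ l, |W k l|) * (x k * x k) by ring, hxk2]
        ring
      have hz := (Finset.sum_eq_zero_iff_of_nonneg hterm).mp hsum
      intro l
      have hzl : |W k l| * (m * m) - x k * (W k l * x l) = 0 := hz l (Finset.mem_univ l)
      constructor
      · linarith
      · intro hW
        have hWpos : 0 < |W k l| := abs_pos.mpr hW
        have h1 : |W k l| * (m * m) = x k * (W k l * x l) := by linarith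
        have h2 : x k * (W k l * x l) ≤ m * (|W k l| * |x l|) := by
          calc x k * (W k l * x l) ≤ |x k * (W k l * x l)| := le_abs_self _
          _ = |x k| * (|W k l| * |x l|) := by rw [abs_mul, abs_mul]
          _ = m * (|W k l| * |x l|) := by rw [hk]
        have : |W k l| * m ≤ |W k l| * |x l| := by nlinarith
        have : m ≤ |x l| := le_of_mul_le_mul_left (by linarith [this]) hWpos
        exact le_antisymm (hle l) this
    have closure : ∀ j k, Reaches W j k → |x k| = m → |x j| = m := by
      intro j k h
      induction h using Relation.ReflTransGen.head_induction_on with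
      | refl => exact id
      | head h' _ ih =>
        intro hm'
        rename_i a c _
        exact ((key c (ih hm') a).2 h')
    have hrS : |x r| = m := closure r k0 (hr k0) rfl
    have hleadS : ∀ k, IsLeader W k → |x k| = m := by
      intro k hk
      exact closure k r (hk r (hr k)) hrS
    exfalso
    apply hunb
    refine ⟨fun k => x k * m⁻¹, ?_, ?_⟩
    · intro k hk
      have := hleadS k hk
      rcases abs_eq (le_of_lt hm0) |>.mp this with h | h
      · left; show x k * m⁻¹ = 1; rw [h]; field_simp
      · right; show x k * m⁻¹ = -1; rw [h]; field_simp
    · intro k hk l hl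
      have h1 := (key k (hleadS k hk) l).1
      have h2 : x k * W k l * x l = |W k l| * (m * m) := by nlinarith [h1]
      show x k * m⁻¹ * W k l * (x l * m⁻¹) = |W k l|
      have hmne : m ≠ 0 := ne_of_gt hm0
      field_simp
      nlinarith [h2]

/-- Eigenvalues of the complexified signed Laplacian have positive real part. -/
lemma sLap_eig_re_pos (W : Matrix (Fin N) (Fin N) ℝ) (hdiag : ∀ k, W k k = 0)
    (hinj : ∀ x : Fin N → ℝ, (sLap W).mulVec x = 0 → x = 0) {μ : ℂ}
    (hμ : Module.End.HasEigenvalue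
      (Matrix.toLin' ((sLap W).map (Complex.ofReal : ℝ → ℂ))) μ) : 0 < μ.re := by
  set L := sLap W with hL
  set A := L.map (Complex.ofReal : ℝ → ℂ) with hA
  obtain ⟨k, hk⟩ := eigenvalue_mem_ball hμ
  have hdk : L k k = ∑ l, |W k l| := by
    simp [hL, sLap, Matrix.diagonal, hdiag k]
  set d : ℝ := ∑ l, |W k l| with hd
  have hd0 : 0 ≤ d := Finset.sum_nonneg fun l _ => abs_nonneg _
  have hAkk : A k k = (d : ℂ) := by simp [hA, Matrix.map_apply, hdk]
  have hrad : (∑ j ∈ Finset.univ.erase k, ‖A k j‖) = d := by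
    have h1 : ∀ j ∈ Finset.univ.erase k, ‖A k j‖ = |W k j| := by
      intro j hj
      have hjk : j ≠ k := Finset.ne_of_mem_erase hj
      have : L k j = -W k j := by simp [hL, sLap, Matrix.diagonal_apply_ne' _ hjk]
      simp [hA, Matrix.map_apply, this]
    rw [Finset.sum_congr rfl h1, hd]
    rw [Finset.sum_erase_eq_sub (Finset.mem_univ k)]
    simp [hdiag k]
  rw [hAkk, hrad, Metric.mem_closedBall, Complex.dist_eq] at hk
  have habs2 : (μ - (d:ℂ)).re ^ 2 + (μ - (d:ℂ)).im ^ 2 ≤ d ^ 2 := by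
    have h2 : ‖μ - (d:ℂ)‖ ^ 2 ≤ d ^ 2 := by
      apply pow_le_pow_left₀ (norm_nonneg _) hk
    rwa [Complex.sq_norm, Complex.normSq_apply, ← pow_two, ← pow_two] at h2
  have hre : (μ - (d:ℂ)).re = μ.re - d := by simp
  have him : (μ - (d:ℂ)).im = μ.im := by simp
  rw [hre, him] at habs2
  have hkey : μ.re ^ 2 + μ.im ^ 2 ≤ 2 * d * μ.re := by nlinarith
  by_contra hcon
  push_neg at hcon
  have hre0 : μ.re = 0 := by
    nlinarith [sq_nonneg μ.re, sq_nonneg μ.im, mul_nonneg hd0 (neg_nonneg.mpr hcon)]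
  have him0 : μ.im = 0 := by nlinarith [sq_nonneg μ.im]
  have hμ0 : μ = 0 := Complex.ext hre0 him0
  rw [hμ0] at hμ
  obtain ⟨v, hv⟩ := hμ.exists_hasEigenvector
  have hvne := hv.right
  have hAv : A.mulVec v = 0 := by
    have := hv.apply_eq_smul
    rw [Matrix.toLin'_apply] at this
    simpa using this
  have hre' : L.mulVec (fun l => (v l).re) = 0 := by
    funext j
    have := congrFun hAv j
    have h2 : ((A.mulVec v) j).re = (L.mulVec (fun l => (v l).re)) j := by
      simp only [Matrix.mulVec, dotProduct, hA, Matrix.map_apply, Complex.re_sum]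
      exact Finset.sum_congr rfl fun l _ => by simp [Complex.re_ofReal_mul]
    rw [this] at h2
    simpa using h2.symm
  have him' : L.mulVec (fun l => (v l).im) = 0 := by
    funext j
    have := congrFun hAv j
    have h2 : ((A.mulVec v) j).im = (L.mulVec (fun l => (v l).im)) j := by
      simp only [Matrix.mulVec, dotProduct, hA, Matrix.map_apply, Complex.im_sum]
      exact Finset.sum_congr rfl fun l _ => by simp [Complex.im_ofReal_mul]
    rw [this] at h2
    simpa using h2.symm
  apply hvne
  have h1 := hinj _ hre'
  have h2 := hinj _ him'
  funext j
  have := congrFun h1 j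
  have := congrFun h2 j
  simp only [Pi.zero_apply] at *
  exact Complex.ext ‹(v j).re = 0› ‹(v j).im = 0›

/-- The linear map `M ↦ M.mulVec v`, as a continuous linear map (complex version). -/
noncomputable def mulVecCLM (v : Fin N → ℂ) :
    Matrix (Fin N) (Fin N) ℂ →L[ℂ] (Fin N → ℂ) :=
  LinearMap.toContinuousLinearMap
    { toFun := fun M => M.mulVec v
      map_add' := fun M1 M2 => Matrix.add_mulVec M1 M2 v
      map_smul' := fun c M => Matrix.smul_mulVec c M v }

lemma mulVecCLM_apply (v : Fin N → ℂ) (M : Matrix (Fin N) (Fin N) ℂ) :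
    mulVecCLM v M = M.mulVec v := rfl

/-- Decay of the matrix exponential applied to a vector when all eigenvalues have
positive real part. -/
lemma exp_mulVec_tendsto_zero (A : Matrix (Fin N) (Fin N) ℂ)
    (hA : ∀ μ : ℂ, Module.End.HasEigenvalue (Matrix.toLin' A) μ → 0 < μ.re)
    (v : Fin N → ℂ) :
    Tendsto (fun s : ℝ => (exp ((-(s:ℂ)) • A)).mulVec v) atTop (nhds 0) := by
  set f : Module.End ℂ (Fin N → ℂ) := Matrix.toLin' A with hf
  set P : Submodule ℂ (Fin N → ℂ) :=
    { carrier := {w | Tendsto (fun s : ℝ => (exp ((-(s:ℂ)) • A)).mulVec w) atTop (nhds 0)}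
      add_mem' := by
        intro a b ha hb
        have := ha.add hb
        simpa [Matrix.mulVec_add] using this
      zero_mem' := by simp [Matrix.mulVec_zero, tendsto_const_nhds]
      smul_mem' := by
        intro c a ha
        have := ha.const_smul c
        simpa [Matrix.mulVec_smul] using this } with hP
  suffices h : ∀ μ : ℂ, f.maxGenEigenspace μ ≤ P by
    have htop : ⨆ μ : ℂ, f.maxGenEigenspace μ = ⊤ := Module.End.iSup_maxGenEigenspace_eq_top f
    have : (⊤ : Submodule ℂ (Fin N → ℂ)) ≤ P := htop ▸ iSup_le h
    exact this (Submodule.mem_top)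
  intro μ w hw
  rcases eq_or_ne w 0 with rfl | hw0
  · exact P.zero_mem
  have hμev : Module.End.HasEigenvalue f μ := by
    rw [Module.End.maxGenEigenspace, Module.End.mem_genEigenspace] at hw
    obtain ⟨l, -, hl⟩ := hw
    have hl0 : l ≠ 0 := by
      rintro rfl
      simp only [pow_zero, LinearMap.mem_ker, Module.End.one_apply] at hl
      exact hw0 hl
    refine Module.End.hasEigenvalue_of_hasGenEigenvalue (k := l) ?_
    rw [Module.End.hasGenEigenvalue_iff]
    intro hbot
    apply hw0
    have : w ∈ f.genEigenspace μ l := Module.End.mem_genEigenspace_nat.mpr hl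
    rw [hbot] at this
    simpa using this
  have hre : 0 < μ.re := hA μ hμev
  obtain ⟨k, hk⟩ : ∃ k : ℕ, ((f - μ • 1) ^ k) w = 0 := by
    rw [Module.End.mem_maxGenEigenspace] at hw
    exact hw
  set B : Matrix (Fin N) (Fin N) ℂ := A - μ • 1 with hB
  have hBpow : ∀ (n : ℕ) (u : Fin N → ℂ), (B ^ n).mulVec u = ((f - μ • 1) ^ n) u := by
    intro n
    induction n with
    | zero => intro u; simp
    | succ n ih =>
      intro u
      rw [pow_succ, pow_succ]
      rw [← Matrix.mulVec_mulVec]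
      rw [show (B.mulVec u) = (f - μ • 1) u by
        simp [hB, Matrix.sub_mulVec, Matrix.smul_mulVec, hf, Matrix.toLin'_apply,
          LinearMap.sub_apply, LinearMap.smul_apply]]
      rw [ih ((f - μ • 1) u)]
      simp [Module.End.mul_apply]
  have hBk : (B ^ k).mulVec w = 0 := by rw [hBpow k w, hk]
  have hdecomp : ∀ s : ℝ, (exp ((-(s:ℂ)) • A)).mulVec w
      = Complex.exp ((-(s:ℂ)) * μ) • ∑ n ∈ Finset.range k,
          ((n.factorial : ℂ)⁻¹ * (-(s:ℂ)) ^ n) • (B ^ n).mulVec w := by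
    intro s
    set c : ℂ := -(s:ℂ) with hc
    have hsplit : c • A = algebraMap ℂ (Matrix (Fin N) (Fin N) ℂ) (c * μ) + c • B := by
      rw [Algebra.algebraMap_eq_smul_one, hB]
      rw [smul_sub, smul_smul]
      module
    have hcomm : Commute (algebraMap ℂ (Matrix (Fin N) (Fin N) ℂ) (c * μ)) (c • B) :=
      Algebra.commutes _ _
    rw [hsplit]
    erw [exp_add_of_commute hcomm]
    rw [← algebraMap_exp_comm]
    have hexpc : exp (c * μ) = Complex.exp (c * μ) := by
      rw [Complex.exp_eq_exp_ℂ]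
    rw [hexpc, Algebra.algebraMap_eq_smul_one, smul_one_mul, Matrix.smul_mulVec]
    congr 1
    have hsummable : Summable fun n : ℕ => ((n.factorial : ℂ)⁻¹ : ℂ) • (c • B) ^ n :=
      expSeries_summable' (𝕂 := ℂ) (c • B)
    have h1 : (exp (c • B)).mulVec w
        = ∑' n : ℕ, ((n.factorial : ℂ)⁻¹ * c ^ n) • (B ^ n).mulVec w := by
      rw [exp_eq_tsum (𝕂 := ℂ)]
      rw [← mulVecCLM_apply w, (mulVecCLM w).map_tsum hsummable]
      congr 1
      funext n
      rw [_root_.map_smul, mulVecCLM_apply, smul_pow, Matrix.smul_mulVec, smul_smul]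
    erw [h1]
    apply tsum_eq_sum
    intro n hn
    rw [Finset.mem_range, not_lt] at hn
    have : (B ^ n).mulVec w = 0 := by
      have : B ^ n = B ^ (n - k) * B ^ k := by rw [← pow_add]; congr 1; omega
      rw [this, ← Matrix.mulVec_mulVec, hBk, Matrix.mulVec_zero]
    rw [this, smul_zero]
  show Tendsto _ atTop (nhds 0)
  rw [show (fun s : ℝ => (exp ((-(s:ℂ)) • A)).mulVec w)
      = fun s : ℝ => Complex.exp ((-(s:ℂ)) * μ) • ∑ n ∈ Finset.range k,
          ((n.factorial : ℂ)⁻¹ * (-(s:ℂ)) ^ n) • (B ^ n).mulVec w from funext hdecomp]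
  have hbound : ∀ s : ℝ, 0 ≤ s →
      ‖Complex.exp ((-(s:ℂ)) * μ) • ∑ n ∈ Finset.range k,
          ((n.factorial : ℂ)⁻¹ * (-(s:ℂ)) ^ n) • (B ^ n).mulVec w‖
      ≤ ∑ n ∈ Finset.range k,
          Real.exp (-(μ.re * s)) * s ^ n * ((n.factorial : ℝ)⁻¹ * ‖(B ^ n).mulVec w‖) := by
    intro s hs
    rw [norm_smul]
    have habs : ‖Complex.exp ((-(s:ℂ)) * μ)‖ = Real.exp (-(μ.re * s)) := by
      rw [Complex.norm_exp]
      congr 1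
      simp [mul_comm]
    rw [habs]
    calc Real.exp (-(μ.re * s)) * ‖∑ n ∈ Finset.range k,
          ((n.factorial : ℂ)⁻¹ * (-(s:ℂ)) ^ n) • (B ^ n).mulVec w‖
        ≤ Real.exp (-(μ.re * s)) * ∑ n ∈ Finset.range k,
            ‖((n.factorial : ℂ)⁻¹ * (-(s:ℂ)) ^ n) • (B ^ n).mulVec w‖ := by
          apply mul_le_mul_of_nonneg_left (norm_sum_le _ _) (Real.exp_nonneg _)
      _ = ∑ n ∈ Finset.range k,
            Real.exp (-(μ.re * s)) * s ^ n * ((n.factorial : ℝ)⁻¹ * ‖(B ^ n).mulVec w‖) := by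
          rw [Finset.mul_sum]
          apply Finset.sum_congr rfl
          intro n _
          rw [norm_smul, norm_mul, norm_pow]
          have h1 : ‖((n.factorial : ℂ)⁻¹)‖ = (n.factorial : ℝ)⁻¹ := by
            rw [norm_inv]; norm_num
          have h2 : ‖(-(s:ℂ))‖ = s := by
            rw [norm_neg, Complex.norm_real, Real.norm_eq_abs, abs_of_nonneg hs]
          rw [h1, h2]; ring
  apply squeeze_zero_norm' (Eventually.mono (eventually_ge_atTop 0) fun s hs => hbound s hs)
  have : Tendsto (fun s : ℝ => ∑ n ∈ Finset.range k,
      Real.exp (-(μ.re * s)) * s ^ n * ((n.factorial : ℝ)⁻¹ * ‖(B ^ n).mulVec w‖)) atTop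
      (nhds (∑ n ∈ Finset.range k, 0)) := by
    apply tendsto_finset_sum
    intro n _
    rw [show (0:ℝ) = 0 * ((n.factorial : ℝ)⁻¹ * ‖(B ^ n).mulVec w‖) by ring]
    apply Tendsto.mul_const
    have key : Tendsto (fun s : ℝ => Real.exp (-(μ.re * s)) * s ^ n) atTop (nhds 0) := by
      have h1 : Tendsto (fun y : ℝ => y ^ n * Real.exp (-y)) atTop (nhds 0) :=
        Real.tendsto_pow_mul_exp_neg_atTop_nhds_zero n
      have h2 : Tendsto (fun s : ℝ => μ.re * s) atTop atTop :=
        Tendsto.const_mul_atTop hre tendsto_id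
      have h4 : Tendsto (fun s : ℝ => (μ.re * s) ^ n * Real.exp (-(μ.re * s))) atTop (nhds 0) :=
        h1.comp h2
      have h5 := h4.mul_const ((μ.re ^ n)⁻¹)
      rw [zero_mul] at h5
      apply h5.congr'
      filter_upwards [eventually_ge_atTop 0] with s _
      have hμn : (μ.re : ℝ) ^ n ≠ 0 := pow_ne_zero n (ne_of_gt hre)
      field_simp
      ring
    exact key
  simpa using this

noncomputable def entryCLM (k l : Fin N) : Matrix (Fin N) (Fin N) ℝ →L[ℝ] ℝ :=
  LinearMap.toContinuousLinearMap
    { toFun := fun M => M k l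
      map_add' := fun _ _ => rfl
      map_smul' := fun _ _ => rfl }

lemma entryCLM_apply (k l : Fin N) (M : Matrix (Fin N) (Fin N) ℝ) :
    entryCLM k l M = M k l := rfl

/-- If `X' = -(φ' t) • L X` on `[a,b]`, then `exp(φ t • L) X t` is constant there. -/
lemma exp_mulVec_const (L : Matrix (Fin N) (Fin N) ℝ) (X : ℝ → Fin N → ℝ)
    (φ φ' : ℝ → ℝ) {a b : ℝ} (hab : a ≤ b)
    (hφ : ∀ t ∈ Set.Icc a b, HasDerivAt φ (φ' t) t)
    (hX : ∀ t ∈ Set.Icc a b, HasDerivAt X ((-(φ' t)) • L.mulVec (X t)) t) :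
    (exp (φ b • L)).mulVec (X b) = (exp (φ a • L)).mulVec (X a) := by
  set Y : ℝ → Fin N → ℝ := fun t => (exp (φ t • L)).mulVec (X t) with hYdef
  have hYd : ∀ t ∈ Set.Icc a b, HasDerivAt Y 0 t := by
    intro t ht
    set E : Matrix (Fin N) (Fin N) ℝ := exp (φ t • L) with hE
    have hEc : HasDerivAt (fun u : ℝ => exp (φ u • L)) ((φ' t) • (E * L)) t := by
      have h1 : HasDerivAt (fun s : ℝ => exp (s • L)) (E * L) (φ t) :=
        hasDerivAt_exp_smul_const L (φ t)
      have := HasDerivAt.scomp (𝕜 := ℝ) (𝕜' := ℝ) t h1 (hφ t ht)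
      exact this
    have hEkl : ∀ k l, HasDerivAt (fun u => exp (φ u • L) k l) (φ' t * (E * L) k l) t := by
      intro k l
      have := (entryCLM k l).hasFDerivAt.comp_hasDerivAt t hEc
      exact this
    have hXl : ∀ l, HasDerivAt (fun u => X u l) ((-(φ' t)) * (L.mulVec (X t)) l) t := by
      intro l
      have := hasDerivAt_pi.1 (hX t ht) l
      simpa using this
    rw [hasDerivAt_pi]
    intro k
    have hsum : HasDerivAt (fun u => ∑ l, exp (φ u • L) k l * X u l)
        (∑ l, (φ' t * (E * L) k l * X t l
          + exp (φ t • L) k l * ((-(φ' t)) * (L.mulVec (X t)) l))) t := by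
      apply HasDerivAt.fun_sum
      intro l _
      exact (hEkl k l).mul (hXl l)
    have hzero : (∑ l, (φ' t * (E * L) k l * X t l
        + exp (φ t • L) k l * ((-(φ' t)) * (L.mulVec (X t)) l))) = 0 := by
      rw [Finset.sum_add_distrib]
      have e1 : ∑ l, φ' t * (E * L) k l * X t l = φ' t * ((E.mulVec (L.mulVec (X t))) k) := by
        rw [Matrix.mulVec_mulVec]
        simp only [Matrix.mulVec, dotProduct]
        rw [Finset.mul_sum]
        exact Finset.sum_congr rfl fun l _ => by ring
      have e2 : ∑ l, exp (φ t • L) k l * ((-(φ' t)) * (L.mulVec (X t)) l)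
          = -(φ' t) * ((E.mulVec (L.mulVec (X t))) k) := by
        simp only [Matrix.mulVec, dotProduct, hE]
        rw [Finset.mul_sum]
        exact Finset.sum_congr rfl fun l _ => by ring
      rw [e1, e2]
      ring
    have : HasDerivAt (fun u => Y u k) (0:ℝ) t := by
      rw [← hzero]
      exact hsum
    simpa using this
  have hconst := constant_of_has_deriv_right_zero
    (f := Y) (a := a) (b := b)
    (fun t ht => (hYd t ht).continuousAt.continuousWithinAt)
    (fun t ht => (hYd t (Set.mem_Icc.mpr ⟨ht.1, le_of_lt ht.2⟩)).hasDerivWithinAt)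
  exact hconst b (Set.right_mem_Icc.mpr hab)

lemma exp_neg_mul_exp_smul (L : Matrix (Fin N) (Fin N) ℝ) (s : ℝ) :
    exp ((-s) • L) * exp (s • L) = 1 := by
  rw [show (-s) • L = -(s • L) by rw [neg_smul]]
  erw [← exp_add_of_commute (Commute.refl (s • L)).neg_left]
  simp

noncomputable def mapCLM : Matrix (Fin N) (Fin N) ℝ →L[ℝ] Matrix (Fin N) (Fin N) ℂ :=
  LinearMap.toContinuousLinearMap
    { toFun := fun M => M.map (Complex.ofReal : ℝ → ℂ)
      map_add' := fun M1 M2 => by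
        ext k l; simp [Matrix.map_apply]
      map_smul' := fun c M => by
        ext k l; simp [Matrix.map_apply, Complex.ofReal_mul, Complex.real_smul] }

/-- Real version of the decay lemma. -/
lemma real_exp_mulVec_tendsto_zero (L : Matrix (Fin N) (Fin N) ℝ)
    (hA : ∀ μ : ℂ, Module.End.HasEigenvalue
      (Matrix.toLin' (L.map (Complex.ofReal : ℝ → ℂ))) μ → 0 < μ.re)
    (v : Fin N → ℝ) :
    Tendsto (fun s : ℝ => (exp ((-s) • L)).mulVec v) atTop (nhds 0) := by
  have hc := exp_mulVec_tendsto_zero (L.map (Complex.ofReal : ℝ → ℂ)) hA (fun k => (v k : ℂ))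
  have hkey : ∀ s : ℝ, ∀ k, (((exp ((-s) • L)).mulVec v k : ℝ) : ℂ)
      = (exp ((-(s:ℂ)) • (L.map (Complex.ofReal : ℝ → ℂ)))).mulVec (fun j => (v j : ℂ)) k := by
    intro s k
    have hcont : Continuous (⇑(Complex.ofRealHom.mapMatrix :
        Matrix (Fin N) (Fin N) ℝ →+* Matrix (Fin N) (Fin N) ℂ)) := by
      have : (⇑(Complex.ofRealHom.mapMatrix :
          Matrix (Fin N) (Fin N) ℝ →+* Matrix (Fin N) (Fin N) ℂ)) = ⇑(mapCLM (N := N)) := rfl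
      rw [this]
      exact (mapCLM (N := N)).continuous
    have e1 : (exp ((-s) • L)).map (Complex.ofReal : ℝ → ℂ)
        = exp (((-s) • L).map (Complex.ofReal : ℝ → ℂ)) := by
      have := map_exp (Complex.ofRealHom.mapMatrix :
        Matrix (Fin N) (Fin N) ℝ →+* Matrix (Fin N) (Fin N) ℂ) hcont ((-s) • L)
      exact this
    have e2 : ((-s) • L).map (Complex.ofReal : ℝ → ℂ)
        = (-(s:ℂ)) • (L.map (Complex.ofReal : ℝ → ℂ)) := by
      ext i j
      simp [Matrix.map_apply]
    have e3 : exp ((-(s:ℂ)) • (L.map (Complex.ofReal : ℝ → ℂ)))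
        = exp ((-(s:ℂ)) • (L.map (Complex.ofReal : ℝ → ℂ))) := by
      rfl
    rw [← e3, ← e2, ← e1]
    simp [Matrix.mulVec, dotProduct, Matrix.map_apply]
  rw [tendsto_pi_nhds]
  intro k
  have h5 : Tendsto (fun s : ℝ => (((exp ((-s) • L)).mulVec v k : ℝ) : ℂ)) atTop (nhds 0) := by
    have := tendsto_pi_nhds.1 hc k
    apply this.congr
    intro s
    exact (hkey s k).symm
  have h6 := (Complex.continuous_re.tendsto 0).comp h5
  simpa [Function.comp_def] using h6

theorem prescribed_time_stability_quasi_unbalanced_leaders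
    {N : ℕ} (hN : 2 ≤ N) (W : Matrix (Fin N) (Fin N) ℝ)
    (hdiag : ∀ k, W k k = 0)
    (hQS : QuasiStronglyConnected W)
    (hunb : ¬ ∃ g : Fin N → ℝ, IsGauge W {k | IsLeader W k} g)
    (κ ρ1 ρ2 T1 : ℝ) (hκ : 2 < κ) (hρ1 : 0 < ρ1) (hρ2 : 0 < ρ2) (hT1 : 0 < T1)
    (X : ℝ → Fin N → ℝ) (hX : NominalTraj W κ ρ1 ρ2 T1 X) :
    ∀ t : ℝ, T1 ≤ t → ∀ k, X t k = 0 := by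
  obtain ⟨hXc, hXd⟩ := hX
  set L := sLap W with hLdef
  have hinj : ∀ x : Fin N → ℝ, L.mulVec x = 0 → x = 0 :=
    fun x hx => sLap_mulVec_eq_zero W hQS hunb x hx
  have hspec : ∀ μ : ℂ, Module.End.HasEigenvalue
      (Matrix.toLin' (L.map (Complex.ofReal : ℝ → ℂ))) μ → 0 < μ.re :=
    fun μ hμ => sLap_eig_re_pos W hdiag hinj hμ
  have hdecay := real_exp_mulVec_tendsto_zero L hspec (X 0)
  set φ : ℝ → ℝ := fun t => ρ1 * t + ρ2 * κ * (Real.log T1 - Real.log (T1 - t)) with hφdef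
  set φ' : ℝ → ℝ := fun t => ρ1 + ρ2 * gain κ T1 t with hφ'def
  have hφd : ∀ t, 0 ≤ t → t < T1 → HasDerivAt φ (φ' t) t := by
    intro t ht0 ht1
    have hpos : 0 < T1 - t := by linarith
    have h1 : HasDerivAt (fun u : ℝ => T1 - u) (-1) t := (hasDerivAt_id t).const_sub T1
    have h2 : HasDerivAt (fun u : ℝ => Real.log (T1 - u)) ((T1 - t)⁻¹ * -1) t := by
      have hlog := Real.hasDerivAt_log (ne_of_gt hpos)
      simpa [Function.comp_def] using HasDerivAt.comp t hlog h1
    have h3 := h2.const_sub (Real.log T1)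
    have h4 := h3.const_mul (ρ2 * κ)
    have h5 : HasDerivAt (fun u : ℝ => ρ1 * u) ρ1 t := by
      simpa using (hasDerivAt_id t).const_mul ρ1
    have h6 := h5.add h4
    have heqd : φ' t = ρ1 + ρ2 * κ * -((T1 - t)⁻¹ * -1) := by
      rw [hφ'def]
      simp only [gain, if_pos (And.intro ht0 ht1)]
      field_simp
    rw [heqd]
    exact h6
  have hφ0 : φ 0 = 0 := by simp [hφdef]
  have hpart1 : ∀ b, 0 ≤ b → b < T1 →
      X b = (NormedSpace.exp ((-(φ b)) • L)).mulVec (X 0) := by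
    intro b hb0 hb1
    have hconst := exp_mulVec_const L X φ φ' hb0
      (fun t ht => hφd t ht.1 (lt_of_le_of_lt ht.2 hb1))
      (fun t ht => by
        have := hXd t ht.1 (ne_of_lt (lt_of_le_of_lt ht.2 hb1))
        exact this)
    rw [hφ0, zero_smul, NormedSpace.exp_zero, Matrix.one_mulVec] at hconst
    calc X b = (1 : Matrix (Fin N) (Fin N) ℝ).mulVec (X b) := by rw [Matrix.one_mulVec]
      _ = ((NormedSpace.exp ((-(φ b)) • L) * NormedSpace.exp ((φ b) • L)).mulVec (X b)) := by
            rw [exp_neg_mul_exp_smul]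
      _ = (NormedSpace.exp ((-(φ b)) • L)).mulVec
            ((NormedSpace.exp ((φ b) • L)).mulVec (X b)) := by
            rw [← Matrix.mulVec_mulVec]
      _ = _ := by rw [hconst]
  have hφtop : Filter.Tendsto φ (nhdsWithin T1 (Set.Iio T1)) Filter.atTop := by
    have h1 : Filter.Tendsto (fun t => T1 - t) (nhdsWithin T1 (Set.Iio T1))
        (nhdsWithin 0 (Set.Ioi 0)) := by
      apply tendsto_nhdsWithin_of_tendsto_nhds_of_eventually_within
      · have : Filter.Tendsto (fun t : ℝ => T1 - t) (nhds T1) (nhds (T1 - T1)) :=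
          (continuous_const.sub continuous_id).tendsto T1
        simpa using this.mono_left nhdsWithin_le_nhds
      · filter_upwards [self_mem_nhdsWithin] with u hu
        exact Set.mem_Ioi.mpr (sub_pos.mpr hu)
    have h2 : Filter.Tendsto (fun t => Real.log (T1 - t)) (nhdsWithin T1 (Set.Iio T1))
        Filter.atBot := Real.tendsto_log_nhdsGT_zero.comp h1
    have h3 : Filter.Tendsto (fun t => Real.log T1 - Real.log (T1 - t))
        (nhdsWithin T1 (Set.Iio T1)) Filter.atTop := by
      have hneg := Filter.tendsto_neg_atBot_atTop.comp h2
      have h4 := Filter.tendsto_atTop_add_const_left _ (Real.log T1) hneg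
      apply h4.congr
      intro u
      show Real.log T1 + -(Real.log (T1 - u)) = _
      ring
    have h5 := Filter.Tendsto.const_mul_atTop (show (0:ℝ) < ρ2 * κ by positivity) h3
    apply Filter.tendsto_atTop_add_left_of_le' (nhdsWithin T1 (Set.Iio T1)) 0 ?_ h5
    filter_upwards [Ioo_mem_nhdsLT_of_mem
      (show T1 ∈ Set.Ioc 0 T1 from ⟨hT1, le_refl T1⟩)] with u hu
    nlinarith [hu.1, hρ1.le]
  have hXT1 : X T1 = 0 := by
    have hl1 : Filter.Tendsto X (nhdsWithin T1 (Set.Iio T1)) (nhds (X T1)) :=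
      (hXc.tendsto T1).mono_left nhdsWithin_le_nhds
    have hl2 : Filter.Tendsto X (nhdsWithin T1 (Set.Iio T1)) (nhds 0) := by
      have hcomp : Filter.Tendsto (fun t => (NormedSpace.exp ((-(φ t)) • L)).mulVec (X 0))
          (nhdsWithin T1 (Set.Iio T1)) (nhds 0) := hdecay.comp hφtop
      apply hcomp.congr'
      filter_upwards [Ioo_mem_nhdsLT_of_mem
        (show T1 ∈ Set.Ioc 0 T1 from ⟨hT1, le_refl T1⟩)] with u hu
      exact (hpart1 u hu.1.le hu.2).symm
    exact tendsto_nhds_unique hl1 hl2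
  intro t htT1 k
  rcases eq_or_lt_of_le htT1 with heq | hlt
  · rw [← heq, hXT1]
    rfl
  · set ψ : ℝ → ℝ := fun u => ρ1 * (u - T1) with hψdef
    set Z : ℝ → Fin N → ℝ := fun u => (NormedSpace.exp (ψ u • L)).mulVec (X u) with hZdef
    have hψd : ∀ s : ℝ, HasDerivAt ψ ρ1 s := fun s => by
      simpa using ((hasDerivAt_id s).sub_const T1).const_mul ρ1
    have hZconst : ∀ u, T1 < u → u ≤ t → Z t = Z u := by
      intro u hu1 hu2
      exact exp_mulVec_const L X ψ (fun _ => ρ1) hu2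
        (fun s _ => hψd s)
        (fun s hs => by
          have hs1 : T1 < s := lt_of_lt_of_le hu1 hs.1
          have hgain : gain κ T1 s = 0 := by
            rw [gain, if_neg]
            rintro ⟨-, h⟩
            linarith
          have hd := hXd s (le_trans hT1.le hs1.le) (ne_of_gt hs1)
          rw [hgain] at hd
          simpa using hd)
    have hψcont : Continuous ψ := continuous_const.mul (continuous_id.sub continuous_const)
    have hZc : Continuous Z := by
      apply continuous_pi
      intro k'
      show Continuous fun u => ∑ l, NormedSpace.exp (ψ u • L) k' l * X u l
      apply continuous_finset_sum
      intro l _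
      have hexp : Continuous fun u => NormedSpace.exp (ψ u • L) :=
        NormedSpace.exp_continuous.comp (hψcont.smul continuous_const)
      exact (((entryCLM k' l).continuous.comp hexp).mul ((continuous_apply l).comp hXc))
    have hZT1 : Z T1 = X T1 := by
      have hψT1 : ψ T1 = 0 := by simp [hψdef]
      show (NormedSpace.exp (ψ T1 • L)).mulVec (X T1) = X T1
      rw [hψT1, zero_smul, NormedSpace.exp_zero, Matrix.one_mulVec]
    have hZt : Z t = 0 := by
      have hl1 : Filter.Tendsto Z (nhdsWithin T1 (Set.Ioi T1)) (nhds (Z T1)) :=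
        (hZc.tendsto T1).mono_left nhdsWithin_le_nhds
      have hl2 : Filter.Tendsto Z (nhdsWithin T1 (Set.Ioi T1)) (nhds (Z t)) := by
        apply Filter.Tendsto.congr' _ tendsto_const_nhds
        filter_upwards [Ioo_mem_nhdsGT_of_mem
          (show T1 ∈ Set.Ico T1 t from ⟨le_refl T1, hlt⟩)] with u hu
        exact hZconst u hu.1 hu.2.le
      have := tendsto_nhds_unique hl2 hl1
      rw [this, hZT1, hXT1]
    have hXt : X t = 0 := by
      have h1 : X t = (NormedSpace.exp ((-(ψ t)) • L)).mulVec (Z t) := by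
        calc X t = (1 : Matrix (Fin N) (Fin N) ℝ).mulVec (X t) := by rw [Matrix.one_mulVec]
          _ = ((NormedSpace.exp ((-(ψ t)) • L) * NormedSpace.exp ((ψ t) • L)).mulVec (X t)) := by
                rw [exp_neg_mul_exp_smul]
          _ = (NormedSpace.exp ((-(ψ t)) • L)).mulVec
                ((NormedSpace.exp ((ψ t) • L)).mulVec (X t)) := by
                rw [← Matrix.mulVec_mulVec]
          _ = _ := rfl
      rw [h1, hZt, Matrix.mulVec_zero]
    rw [hXt]
    rfl

end Helpers
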